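/- In the good/bad/ugly setting, for every i with 0 ≤ i ≤ m one has ‖ugly^i‖ ≤ Σ_{j=1}^{i} ‖bad^j‖ and ‖ugly^i‖² ≤ i · (1 − ‖good^i‖²). -/

import Mathlib

theorem welded_tree_ugly_bounds
    {{H : Type*}} [NormedAddCommGroup H] [InnerProductSpace ℂ H]
    (m : ℕ) (C : ℕ → (H ≃ₗᵢ[ℂ] H))
    (P : H →L[ℂ] H)
    (hPidem : ∀ x : H, P (P x) = P x)
    (hPsa : ∀ x y : H, (inner ℂ (P x) y : ℂ) = inner ℂ x (P y))
    (ψ0 : H) (hψ0 : ‖ψ0‖ = 1) (hψ0bad : P ψ0 = 0)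
    (A good bad ugly : ℕ → H)
    (hA0 : A 0 = ψ0)
    (hA : ∀ i : ℕ, 1 ≤ i → i ≤ m → A i = C i (A (i - 1)))
    (hgood0 : good 0 = ψ0) (hbad0 : bad 0 = 0) (hugly0 : ugly 0 = 0)
    (hgood : ∀ i : ℕ, 1 ≤ i → i ≤ m →
      good i = C i (good (i - 1)) - P (C i (good (i - 1))))
    (hbad : ∀ i : ℕ, 1 ≤ i → i ≤ m → bad i = P (C i (good (i - 1))))
    (hugly : ∀ i : ℕ, 1 ≤ i → i ≤ m → ugly i = bad i + C i (ugly (i - 1))) :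
    ∀ i : ℕ, i ≤ m →
      ‖ugly i‖ ≤ ∑ j ∈ Finset.Icc 1 i, ‖bad j‖ ∧
      ‖ugly i‖ ^ 2 ≤ (i : ℝ) * (1 - ‖good i‖ ^ 2) := by
  -- auxiliary: for all i ≤ m, ‖ugly i‖ ≤ Σ ‖bad j‖ and Σ ‖bad j‖² + ‖good i‖² = 1
  have key : ∀ i : ℕ, i ≤ m →
      ‖ugly i‖ ≤ ∑ j ∈ Finset.Icc 1 i, ‖bad j‖ ∧
      (∑ j ∈ Finset.Icc 1 i, ‖bad j‖ ^ 2) + ‖good i‖ ^ 2 = 1 := by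
    intro i
    induction i with
    | zero =>
      intro _
      simp [hugly0, hgood0, hψ0]
    | succ n ih =>
      intro hn1
      have hnm : n ≤ m := Nat.le_of_succ_le hn1
      obtain ⟨ih1, ih2⟩ := ih hnm
      have h1 : 1 ≤ n + 1 := Nat.succ_le_succ (Nat.zero_le n)
      have hg := hgood (n + 1) h1 hn1
      have hb := hbad (n + 1) h1 hn1
      have hu := hugly (n + 1) h1 hn1
      simp only [Nat.add_sub_cancel] at hg hb hu
      set y := C (n + 1) (good n) with hy
      -- orthogonality
      have horth : (inner ℂ (good (n+1)) (bad (n+1)) : ℂ) = 0 := by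
        rw [hg, hb, inner_sub_left]
        have : (inner ℂ (P y) (P y) : ℂ) = inner ℂ y (P y) := by
          rw [hPsa, hPidem]
        rw [this]
        ring
      have hsum : good (n+1) + bad (n+1) = y := by rw [hg, hb]; abel
      have hpyth : ‖good (n+1)‖ ^ 2 + ‖bad (n+1)‖ ^ 2 = ‖good n‖ ^ 2 := by
        have h := norm_add_sq_eq_norm_sq_add_norm_sq_of_inner_eq_zero _ _ horth
        rw [hsum] at h
        have hn : ‖y‖ = ‖good n‖ := (C (n+1)).norm_map _
        rw [hn] at h
        nlinarith [h]
      constructor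
      · rw [Finset.sum_Icc_succ_top h1, hu]
        calc ‖bad (n+1) + C (n+1) (ugly n)‖
            ≤ ‖bad (n+1)‖ + ‖C (n+1) (ugly n)‖ := norm_add_le _ _
          _ = ‖bad (n+1)‖ + ‖ugly n‖ := by rw [(C (n+1)).norm_map]
          _ ≤ ‖bad (n+1)‖ + ∑ j ∈ Finset.Icc 1 n, ‖bad j‖ := by linarith
          _ = (∑ j ∈ Finset.Icc 1 n, ‖bad j‖) + ‖bad (n+1)‖ := by ring
      · rw [Finset.sum_Icc_succ_top h1]
        linarith
  intro i hi
  obtain ⟨h1, h2⟩ := key i hi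
  refine ⟨h1, ?_⟩
  have hcs : (∑ j ∈ Finset.Icc 1 i, ‖bad j‖) ^ 2 ≤
      (i : ℝ) * ∑ j ∈ Finset.Icc 1 i, ‖bad j‖ ^ 2 := by
    have h := Finset.sum_mul_sq_le_sq_mul_sq (Finset.Icc 1 i)
      (fun _ => (1 : ℝ)) (fun j => ‖bad j‖)
    simp only [one_mul, one_pow] at h
    have hcard : ((Finset.Icc 1 i).card : ℝ) = (i : ℝ) := by
      rw [Nat.card_Icc]; simp
    calc (∑ j ∈ Finset.Icc 1 i, ‖bad j‖) ^ 2
        ≤ (∑ _j ∈ Finset.Icc 1 i, (1:ℝ)) * ∑ j ∈ Finset.Icc 1 i, ‖bad j‖ ^ 2 := h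
      _ = (i : ℝ) * ∑ j ∈ Finset.Icc 1 i, ‖bad j‖ ^ 2 := by
          rw [Finset.sum_const, nsmul_eq_mul, mul_one, hcard]
  have hug : (0:ℝ) ≤ ‖ugly i‖ := norm_nonneg _
  have hsumnn : (0:ℝ) ≤ ∑ j ∈ Finset.Icc 1 i, ‖bad j‖ :=
    Finset.sum_nonneg fun _ _ => norm_nonneg _
  have h3 : ‖ugly i‖ ^ 2 ≤ (∑ j ∈ Finset.Icc 1 i, ‖bad j‖) ^ 2 := by
    exact pow_le_pow_left₀ hug h1 2
  have h4 : ∑ j ∈ Finset.Icc 1 i, ‖bad j‖ ^ 2 = 1 - ‖good i‖ ^ 2 := by linarith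
  calc ‖ugly i‖ ^ 2 ≤ (∑ j ∈ Finset.Icc 1 i, ‖bad j‖) ^ 2 := h3
    _ ≤ (i : ℝ) * ∑ j ∈ Finset.Icc 1 i, ‖bad j‖ ^ 2 := hcs
    _ = (i : ℝ) * (1 - ‖good i‖ ^ 2) := by rw [h4]
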